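/- Let K > 0 and adopt the boundary conventions φ_{0,j,k} = φ_{1,j,k}, φ_{i,0,k} = φ_{i,1,k}, φ_{i,j,0} = φ_{i,j,1}, and let h_σ = min_{j=0,…,N_σ} h_{σ,j}. Suppose that for all 1 ≤ i ≤ N1, 1 ≤ j ≤ N2, 1 ≤ k ≤ N3: (1/a²)[1/(h₁² φ_{i−1,j,k}) − 1/(h_{1,i−1} h_{1,i} φ_{i,j,k})] ≤ K/2, (1/b²)[1/(h₂² φ_{i,j−1,k}) − 1/(h_{2,j−1} h_{2,j} φ_{i,j,k})] ≤ K/2, and (1/c²)[1/(h₃² φ_{i,j,k−1}) − 1/(h_{3,k−1} h_{3,k} φ_{i,j,k})] ≤ K/2. Then the logarithmic norms satisfy μ(M_σ) ≤ K for σ = 1, 2, 3. -/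

import Mathlib

open Matrix
open scoped Kronecker

noncomputable section

namespace Kawarada

/-- The spectral norm (largest singular value) of a real matrix:
the operator norm of the induced map between Euclidean spaces. -/
noncomputable def specNorm {m : Type*} [Fintype m] [DecidableEq m]
    (A : Matrix m m ℝ) : ℝ :=
  ‖LinearMap.toContinuousLinearMap (Matrix.toEuclideanLin A)‖

/-- The `N × N` tridiagonal matrix `T` built from mesh steps `h 0, …, h N`.
Lean row/column index `i : Fin N` corresponds to the paper's index `i + 1`. -/
noncomputable def tridiag (N : ℕ) (h : ℕ → ℝ) : Matrix (Fin N) (Fin N) ℝ :=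
  Matrix.of fun i p =>
    if (i : ℕ) = (p : ℕ) then -2 / (h i * h ((i : ℕ) + 1))
    else if (i : ℕ) = (p : ℕ) + 1 then 2 / (h i * (h i + h ((i : ℕ) + 1)))
    else if (p : ℕ) = (i : ℕ) + 1 then 2 / (h ((i : ℕ) + 1) * (h i + h ((i : ℕ) + 1)))
    else 0

/-- `φ_{i,j,k}` for the paper's indices `i,j,k ≥ 1`. -/
noncomputable def phi (a b c q : ℝ) (h1 h2 h3 : ℕ → ℝ) (i j k : ℕ) : ℝ :=
  (a ^ 2 * (∑ ℓ ∈ Finset.range i, h1 ℓ) ^ 2 +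
      b ^ 2 * (∑ ℓ ∈ Finset.range j, h2 ℓ) ^ 2 +
      c ^ 2 * (∑ ℓ ∈ Finset.range k, h3 ℓ) ^ 2) ^ (q / 2)

/-- Index type for the vectorization: `i` (the `Fin N1` component) varies fastest. -/
abbrev Idx (N1 N2 N3 : ℕ) := Fin N3 × Fin N2 × Fin N1

/-- `φ` as a function of the vectorized index. -/
noncomputable def phiVec (N1 N2 N3 : ℕ) (a b c q : ℝ) (h1 h2 h3 : ℕ → ℝ)
    (p : Idx N1 N2 N3) : ℝ :=
  phi a b c q h1 h2 h3 ((p.2.2 : ℕ) + 1) ((p.2.1 : ℕ) + 1) ((p.1 : ℕ) + 1)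

/-- The diagonal matrix `B` with entries `φ_{i,j,k}⁻¹`. -/
noncomputable def Bdiag (N1 N2 N3 : ℕ) (a b c q : ℝ) (h1 h2 h3 : ℕ → ℝ) :
    Matrix (Idx N1 N2 N3) (Idx N1 N2 N3) ℝ :=
  Matrix.diagonal fun p => (phiVec N1 N2 N3 a b c q h1 h2 h3 p)⁻¹

/-- The matrices `M1, M2, M3`. -/
noncomputable def Mmat (N1 N2 N3 : ℕ) (a b c q : ℝ) (h1 h2 h3 : ℕ → ℝ) :
    Fin 3 → Matrix (Idx N1 N2 N3) (Idx N1 N2 N3) ℝ :=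
  ![(a ^ 2)⁻¹ •
      (Bdiag N1 N2 N3 a b c q h1 h2 h3 *
        ((1 : Matrix (Fin N3) (Fin N3) ℝ) ⊗ₖ
          ((1 : Matrix (Fin N2) (Fin N2) ℝ) ⊗ₖ tridiag N1 h1))),
    (b ^ 2)⁻¹ •
      (Bdiag N1 N2 N3 a b c q h1 h2 h3 *
        ((1 : Matrix (Fin N3) (Fin N3) ℝ) ⊗ₖ
          (tridiag N2 h2 ⊗ₖ (1 : Matrix (Fin N1) (Fin N1) ℝ)))),
    (c ^ 2)⁻¹ •
      (Bdiag N1 N2 N3 a b c q h1 h2 h3 *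
        (tridiag N3 h3 ⊗ₖ
          ((1 : Matrix (Fin N2) (Fin N2) ℝ) ⊗ₖ (1 : Matrix (Fin N1) (Fin N1) ℝ))))]

/-- The minimum of the mesh steps `h σ j`, `j = 0, …, N`, in one direction. -/
noncomputable def dirMin (N : ℕ) (h : ℕ → ℝ) : ℝ :=
  (Finset.range (N + 1)).inf' Finset.nonempty_range_add_one h

/-- The maximum of the mesh steps in one direction. -/
noncomputable def dirMax (N : ℕ) (h : ℕ → ℝ) : ℝ :=
  (Finset.range (N + 1)).sup' Finset.nonempty_range_add_one h

/-- `h = min{h_{σ,j}}`, the global minimal mesh step. -/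
noncomputable def meshMin (N1 N2 N3 : ℕ) (h1 h2 h3 : ℕ → ℝ) : ℝ :=
  min (dirMin N1 h1) (min (dirMin N2 h2) (dirMin N3 h3))

/-- `H = max{h_{σ,j}}`, the global maximal mesh step. -/
noncomputable def meshMax (N1 N2 N3 : ℕ) (h1 h2 h3 : ℕ → ℝ) : ℝ :=
  max (dirMax N1 h1) (max (dirMax N2 h2) (dirMax N3 h3))

/-- `β_min = (h²/2)(a² h_{1,0}² + b² h_{2,0}² + c² h_{3,0}²)^{q/2}`. -/
noncomputable def betaMin (N1 N2 N3 : ℕ) (a b c q : ℝ) (h1 h2 h3 : ℕ → ℝ) : ℝ :=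
  meshMin N1 N2 N3 h1 h2 h3 ^ 2 / 2 *
    (a ^ 2 * h1 0 ^ 2 + b ^ 2 * h2 0 ^ 2 + c ^ 2 * h3 0 ^ 2) ^ (q / 2)

/-- The CFL condition `τ/β_min < min{a², b², c²}`. -/
def CFL (N1 N2 N3 : ℕ) (a b c q : ℝ) (h1 h2 h3 : ℕ → ℝ) (τ : ℝ) : Prop :=
  τ / betaMin N1 N2 N3 a b c q h1 h2 h3 < min (a ^ 2) (min (b ^ 2) (c ^ 2))

/-- `φ_min = min φ_{i,j,k}` (for the grid-sizes `nσ + 2 ≥ 2`). -/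
noncomputable def phiMin (n1 n2 n3 : ℕ) (a b c q : ℝ) (h1 h2 h3 : ℕ → ℝ) : ℝ :=
  Finset.univ.inf' Finset.univ_nonempty
    (phiVec (n1 + 2) (n2 + 2) (n3 + 2) a b c q h1 h2 h3)

/-- The nonlinear source term `g`, acting componentwise: `g(v)_p = f(v_p)/φ_p`. -/
noncomputable def gvec (N1 N2 N3 : ℕ) (a b c q : ℝ) (h1 h2 h3 : ℕ → ℝ) (f : ℝ → ℝ)
    (v : Idx N1 N2 N3 → ℝ) : Idx N1 N2 N3 → ℝ :=
  fun p => f (v p) / phiVec N1 N2 N3 a b c q h1 h2 h3 p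

/-- The LOD propagator
`Φ(τ) = ∏_{σ=1}^3 (I − (τ/2)M_σ)⁻¹ (I + (τ/2)M_σ)`. -/
noncomputable def Phi (N1 N2 N3 : ℕ) (a b c q : ℝ) (h1 h2 h3 : ℕ → ℝ) (τ : ℝ) :
    Matrix (Idx N1 N2 N3) (Idx N1 N2 N3) ℝ :=
  (1 - (τ / 2) • Mmat N1 N2 N3 a b c q h1 h2 h3 0)⁻¹ *
    (1 + (τ / 2) • Mmat N1 N2 N3 a b c q h1 h2 h3 0) *
  ((1 - (τ / 2) • Mmat N1 N2 N3 a b c q h1 h2 h3 1)⁻¹ *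
    (1 + (τ / 2) • Mmat N1 N2 N3 a b c q h1 h2 h3 1)) *
  ((1 - (τ / 2) • Mmat N1 N2 N3 a b c q h1 h2 h3 2)⁻¹ *
    (1 + (τ / 2) • Mmat N1 N2 N3 a b c q h1 h2 h3 2))

theorem isHermitian_symPart {m : Type*} [Fintype m] (A : Matrix m m ℝ) :
    (((2 : ℝ)⁻¹ • (A + Aᵀ))).IsHermitian := by
  show _ᴴ = _
  ext i j
  simp [Matrix.conjTranspose_apply, Matrix.transpose_apply, Matrix.add_apply]
  ring

/-- The logarithmic norm associated with the spectral norm: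
`μ(A) = λ_max((A + Aᵀ)/2)`. -/
noncomputable def logNorm {m : Type*} [Fintype m] [DecidableEq m]
    (A : Matrix m m ℝ) : ℝ :=
  ⨆ i, (isHermitian_symPart A).eigenvalues i

/-- The Euclidean (`ℓ²`) norm of a vector. -/
noncomputable def vecNorm {m : Type*} [Fintype m] (x : m → ℝ) : ℝ :=
  Real.sqrt (∑ i, x i ^ 2)



-- ===== Auxiliary lemmas =====
section Aux
open Finset

lemma tridiag_diag {N : ℕ} (h : ℕ → ℝ) (i : Fin N) :
    tridiag N h i i = -2 / (h i * h ((i : ℕ) + 1)) := by simp [tridiag]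

lemma tridiag_sub {N : ℕ} (h : ℕ → ℝ) {i i' : Fin N} (hii' : (i : ℕ) = (i' : ℕ) + 1) :
    tridiag N h i i' = 2 / (h i * (h i + h ((i : ℕ) + 1))) := by
  simp only [tridiag, Matrix.of_apply]
  rw [if_neg (by omega), if_pos hii']

lemma tridiag_super {N : ℕ} (h : ℕ → ℝ) {i i' : Fin N} (hii' : (i' : ℕ) = (i : ℕ) + 1) :
    tridiag N h i i' = 2 / (h ((i : ℕ) + 1) * (h i + h ((i : ℕ) + 1))) := by
  simp only [tridiag, Matrix.of_apply]
  rw [if_neg (by omega), if_neg (by omega), if_pos hii']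

lemma tridiag_far {N : ℕ} (h : ℕ → ℝ) {i i' : Fin N} (h1 : (i : ℕ) ≠ (i' : ℕ))
    (h2 : (i : ℕ) ≠ (i' : ℕ) + 1) (h3 : (i' : ℕ) ≠ (i : ℕ) + 1) :
    tridiag N h i i' = 0 := by
  simp only [tridiag, Matrix.of_apply]
  rw [if_neg h1, if_neg h2, if_neg h3]

/-- Entry of the symmetric part of `α⁻¹ • diag(ψ⁻¹) * T`, in one direction. -/
noncomputable def symEntry (N : ℕ) (α : ℝ) (h ψ : ℕ → ℝ) (i i' : Fin N) : ℝ :=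
  2⁻¹ * (α⁻¹ * (ψ (i : ℕ))⁻¹ * tridiag N h i i' + α⁻¹ * (ψ (i' : ℕ))⁻¹ * tridiag N h i' i)

lemma oneDim (n : ℕ) (α K : ℝ) (hα : 0 < α) (h ψ : ℕ → ℝ)
    (hpos : ∀ m ≤ n + 2, 0 < h m)
    (hψ : ∀ m ≤ n + 2, 0 < ψ m)
    (hmono : ∀ m, m + 1 ≤ n + 2 → ψ m ≤ ψ (m + 1))
    (d : ℝ) (hd : 0 < d) (hdle : ∀ m ≤ n + 2, d ≤ h m)
    (hS : ∀ i : ℕ, i < n + 2 →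
      α⁻¹ * (1 / (d ^ 2 * ψ (i - 1)) - 1 / (h i * h (i + 1) * ψ i)) ≤ K / 2)
    (i : Fin (n + 2)) :
    symEntry (n + 2) α h ψ i i +
      ∑ i' ∈ Finset.univ.erase i, |symEntry (n + 2) α h ψ i i'| ≤ K := by
  have hiv : (i : ℕ) < n + 2 := i.isLt
  have hψi : 0 < ψ (i : ℕ) := hψ _ (by omega)
  have hψb : 0 < ψ ((i : ℕ) - 1) := hψ _ (by omega)
  have hψs : 0 < ψ ((i : ℕ) + 1) := hψ _ (by omega)
  have hbar_i : ψ ((i : ℕ) - 1) ≤ ψ (i : ℕ) := by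
    rcases Nat.eq_zero_or_pos (i : ℕ) with h0 | h0
    · simp [h0]
    · have := hmono ((i : ℕ) - 1) (by omega)
      rwa [show (i : ℕ) - 1 + 1 = (i : ℕ) by omega] at this
  have hbar_s : ψ ((i : ℕ) - 1) ≤ ψ ((i : ℕ) + 1) :=
    le_trans hbar_i (hmono (i : ℕ) (by omega))
  set C : ℝ := α⁻¹ * (d ^ 2 * ψ ((i : ℕ) - 1))⁻¹ with hCdef
  have hd2 : (0:ℝ) < d ^ 2 := by positivity
  have hC0 : 0 ≤ C := by positivity
  -- pointwise bound for off-diagonal entries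
  have key : ∀ i' : Fin (n + 2), i' ≠ i →
      |symEntry (n + 2) α h ψ i i'| ≤
        (if (i' : ℕ) + 1 = (i : ℕ) then C else 0) +
        (if (i : ℕ) + 1 = (i' : ℕ) then C else 0) := by
    intro i' hne
    have hvne : (i : ℕ) ≠ (i' : ℕ) := fun hc => hne (Fin.ext hc.symm)
    by_cases hl : (i' : ℕ) + 1 = (i : ℕ)
    · rw [if_pos hl, if_neg (by omega), add_zero]
      have hi'v : (i' : ℕ) = (i : ℕ) - 1 := by omega
      rw [symEntry, tridiag_sub h (by omega), tridiag_super h (by omega)]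
      have hh1 : 0 < h (i : ℕ) := hpos _ (by omega)
      have hh2 : 0 < h ((i : ℕ) + 1) := hpos _ (by omega)
      have hh3 : 0 < h ((i' : ℕ)) := hpos _ (by omega)
      have hX : (0:ℝ) < h (i:ℕ) * (h (i:ℕ) + h ((i:ℕ) + 1)) := by positivity
      have hY : (0:ℝ) < h ((i':ℕ) + 1) * (h (i':ℕ) + h ((i':ℕ) + 1)) := by
        rw [hl]; positivity
    -- each of the two terms is ≤ 2⁻¹ * C
      have ht1 : α⁻¹ * (ψ (i:ℕ))⁻¹ * (2 / (h (i:ℕ) * (h (i:ℕ) + h ((i:ℕ) + 1)))) ≤ C := by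
        rw [hCdef, mul_inv]
        have e1 : (ψ (i:ℕ))⁻¹ ≤ (ψ ((i:ℕ) - 1))⁻¹ := inv_anti₀ hψb hbar_i
        have e2 : 2 / (h (i:ℕ) * (h (i:ℕ) + h ((i:ℕ) + 1))) ≤ (d^2)⁻¹ := by
          rw [inv_eq_one_div, div_le_div_iff₀ hX hd2]
          nlinarith [hdle (i:ℕ) (by omega), hdle ((i:ℕ)+1) (by omega)]
        calc α⁻¹ * (ψ (i:ℕ))⁻¹ * (2 / (h (i:ℕ) * (h (i:ℕ) + h ((i:ℕ) + 1))))
            ≤ α⁻¹ * (ψ ((i:ℕ)-1))⁻¹ * (d^2)⁻¹ := by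
              apply mul_le_mul (by apply mul_le_mul_of_nonneg_left e1 (by positivity))
                e2 (by positivity) (by positivity)
          _ = α⁻¹ * ((d^2)⁻¹ * (ψ ((i:ℕ)-1))⁻¹) := by ring
      have hψi'2 : 0 < ψ (i':ℕ) := by rw [hi'v]; exact hψb
      have ht2 : α⁻¹ * (ψ (i':ℕ))⁻¹ * (2 / (h ((i':ℕ)+1) * (h (i':ℕ) + h ((i':ℕ) + 1)))) ≤ C := by
        rw [hCdef, mul_inv]
        have e1 : (ψ (i':ℕ))⁻¹ = (ψ ((i:ℕ)-1))⁻¹ := by rw [hi'v]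
        have e2 : 2 / (h ((i':ℕ)+1) * (h (i':ℕ) + h ((i':ℕ) + 1))) ≤ (d^2)⁻¹ := by
          rw [inv_eq_one_div, div_le_div_iff₀ hY hd2]
          nlinarith [hdle ((i':ℕ)) (by omega), hdle ((i':ℕ)+1) (by omega)]
        calc α⁻¹ * (ψ (i':ℕ))⁻¹ * (2 / (h ((i':ℕ)+1) * (h (i':ℕ) + h ((i':ℕ) + 1))))
            ≤ α⁻¹ * (ψ (i':ℕ))⁻¹ * (d^2)⁻¹ := by
              apply mul_le_mul_of_nonneg_left e2
              positivity
          _ = α⁻¹ * ((d^2)⁻¹ * (ψ ((i:ℕ)-1))⁻¹) := by rw [← e1]; ring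
      have hnn : 0 ≤ 2⁻¹ * (α⁻¹ * (ψ (i:ℕ))⁻¹ * (2 / (h (i:ℕ) * (h (i:ℕ) + h ((i:ℕ) + 1)))) +
          α⁻¹ * (ψ (i':ℕ))⁻¹ * (2 / (h ((i':ℕ)+1) * (h (i':ℕ) + h ((i':ℕ) + 1))))) := by
        positivity
      rw [abs_of_nonneg hnn]
      linarith
    · by_cases hr : (i : ℕ) + 1 = (i' : ℕ)
      · rw [if_neg hl, if_pos hr, zero_add]
        have hi'v : (i' : ℕ) = (i : ℕ) + 1 := hr.symm
        rw [symEntry, tridiag_super h (by omega), tridiag_sub h (by omega)]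
        have hi'lt : (i' : ℕ) < n + 2 := i'.isLt
        have hh1 : 0 < h (i : ℕ) := hpos _ (by omega)
        have hh2 : 0 < h ((i : ℕ) + 1) := hpos _ (by omega)
        have hh3 : 0 < h ((i' : ℕ) + 1) := hpos _ (by omega)
        have hψi' : 0 < ψ (i' : ℕ) := by rw [hi'v]; exact hψs
        have hX : (0:ℝ) < h ((i:ℕ)+1) * (h (i:ℕ) + h ((i:ℕ) + 1)) := by positivity
        have hh4 : 0 < h (i' : ℕ) := by rw [hi'v]; exact hh2
        have hY : (0:ℝ) < h (i':ℕ) * (h (i':ℕ) + h ((i':ℕ) + 1)) := by positivity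
        have ht1 : α⁻¹ * (ψ (i:ℕ))⁻¹ * (2 / (h ((i:ℕ)+1) * (h (i:ℕ) + h ((i:ℕ) + 1)))) ≤ C := by
          rw [hCdef, mul_inv]
          have e1 : (ψ (i:ℕ))⁻¹ ≤ (ψ ((i:ℕ) - 1))⁻¹ := inv_anti₀ hψb hbar_i
          have e2 : 2 / (h ((i:ℕ)+1) * (h (i:ℕ) + h ((i:ℕ) + 1))) ≤ (d^2)⁻¹ := by
            rw [inv_eq_one_div, div_le_div_iff₀ hX hd2]
            nlinarith [hdle (i:ℕ) (by omega), hdle ((i:ℕ)+1) (by omega)]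
          calc α⁻¹ * (ψ (i:ℕ))⁻¹ * (2 / (h ((i:ℕ)+1) * (h (i:ℕ) + h ((i:ℕ) + 1))))
              ≤ α⁻¹ * (ψ ((i:ℕ)-1))⁻¹ * (d^2)⁻¹ := by
                apply mul_le_mul (by apply mul_le_mul_of_nonneg_left e1 (by positivity))
                  e2 (by positivity) (by positivity)
            _ = α⁻¹ * ((d^2)⁻¹ * (ψ ((i:ℕ)-1))⁻¹) := by ring
        have ht2 : α⁻¹ * (ψ (i':ℕ))⁻¹ * (2 / (h (i':ℕ) * (h (i':ℕ) + h ((i':ℕ) + 1)))) ≤ C := by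
          rw [hCdef, mul_inv]
          have e1 : (ψ (i':ℕ))⁻¹ ≤ (ψ ((i:ℕ) - 1))⁻¹ := by
            rw [hi'v]; exact inv_anti₀ hψb hbar_s
          have e2 : 2 / (h (i':ℕ) * (h (i':ℕ) + h ((i':ℕ) + 1))) ≤ (d^2)⁻¹ := by
            rw [inv_eq_one_div, div_le_div_iff₀ hY hd2]
            nlinarith [hdle ((i':ℕ)) (by omega), hdle ((i':ℕ)+1) (by omega)]
          calc α⁻¹ * (ψ (i':ℕ))⁻¹ * (2 / (h (i':ℕ) * (h (i':ℕ) + h ((i':ℕ) + 1))))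
              ≤ α⁻¹ * (ψ ((i:ℕ)-1))⁻¹ * (d^2)⁻¹ := by
                apply mul_le_mul (by apply mul_le_mul_of_nonneg_left e1 (by positivity))
                  e2 (by positivity) (by positivity)
            _ = α⁻¹ * ((d^2)⁻¹ * (ψ ((i:ℕ)-1))⁻¹) := by ring
        have hnn : 0 ≤ 2⁻¹ * (α⁻¹ * (ψ (i:ℕ))⁻¹ * (2 / (h ((i:ℕ)+1) * (h (i:ℕ) + h ((i:ℕ) + 1)))) +
            α⁻¹ * (ψ (i':ℕ))⁻¹ * (2 / (h (i':ℕ) * (h (i':ℕ) + h ((i':ℕ) + 1))))) := by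
          positivity
        rw [abs_of_nonneg hnn]
        linarith
      · rw [if_neg hl, if_neg hr, add_zero]
        rw [symEntry, tridiag_far h hvne (by omega) (by omega),
          tridiag_far h (Ne.symm hvne) (by omega) (by omega)]
        simp
  -- sum the bounds
  have hsum : ∑ i' ∈ Finset.univ.erase i, |symEntry (n + 2) α h ψ i i'| ≤ C + C := by
    have single : ∀ (P : Fin (n + 2) → Prop) [DecidablePred P],
        (∀ x y, P x → P y → x = y) →
        ∑ i' : Fin (n + 2), (if P i' then C else 0) ≤ C := by
      intro P _ hP
      rw [Finset.sum_ite, Finset.sum_const, Finset.sum_const_zero, add_zero]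
      have hcard : (Finset.univ.filter P).card ≤ 1 := by
        apply Finset.card_le_one.mpr
        intro x hx y hy
        exact hP x y (Finset.mem_filter.mp hx).2 (Finset.mem_filter.mp hy).2
      rw [nsmul_eq_mul]
      calc ((Finset.univ.filter P).card : ℝ) * C ≤ 1 * C := by
            apply mul_le_mul_of_nonneg_right _ hC0
            exact_mod_cast hcard
        _ = C := one_mul C
    calc ∑ i' ∈ Finset.univ.erase i, |symEntry (n + 2) α h ψ i i'|
        ≤ ∑ i' ∈ Finset.univ.erase i,
            ((if (i' : ℕ) + 1 = (i : ℕ) then C else 0) +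
             (if (i : ℕ) + 1 = (i' : ℕ) then C else 0)) :=
          Finset.sum_le_sum fun i' hi' => key i' (Finset.ne_of_mem_erase hi')
      _ ≤ ∑ i' : Fin (n + 2),
            ((if (i' : ℕ) + 1 = (i : ℕ) then C else 0) +
             (if (i : ℕ) + 1 = (i' : ℕ) then C else 0)) := by
          apply Finset.sum_le_sum_of_subset_of_nonneg (Finset.erase_subset _ _)
          intro x _ _
          have : (0:ℝ) ≤ (if (x : ℕ) + 1 = (i : ℕ) then C else 0) := by positivity
          have : (0:ℝ) ≤ (if (i : ℕ) + 1 = (x : ℕ) then C else 0) := by positivity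
          positivity
      _ = (∑ i' : Fin (n + 2), (if (i' : ℕ) + 1 = (i : ℕ) then C else 0)) +
          (∑ i' : Fin (n + 2), (if (i : ℕ) + 1 = (i' : ℕ) then C else 0)) :=
          Finset.sum_add_distrib
      _ ≤ C + C := by
          apply add_le_add
          · exact single _ (fun x y hx hy => Fin.ext (by omega))
          · exact single _ (fun x y hx hy => Fin.ext (by omega))
  -- conclude with the diagonal
  have hdiag : symEntry (n + 2) α h ψ i i =
      2⁻¹ * (α⁻¹ * (ψ (i:ℕ))⁻¹ * (-2 / (h (i:ℕ) * h ((i:ℕ) + 1))) +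
        α⁻¹ * (ψ (i:ℕ))⁻¹ * (-2 / (h (i:ℕ) * h ((i:ℕ) + 1)))) := by
    rw [symEntry, tridiag_diag]
  have hh1 : 0 < h (i : ℕ) := hpos _ (by omega)
  have hh2 : 0 < h ((i : ℕ) + 1) := hpos _ (by omega)
  have hSi := hS (i : ℕ) hiv
  have hkey : symEntry (n + 2) α h ψ i i + (C + C) =
      2 * (α⁻¹ * (1 / (d ^ 2 * ψ ((i:ℕ) - 1)) - 1 / (h (i:ℕ) * h ((i:ℕ) + 1) * ψ (i:ℕ)))) := by
    rw [hdiag, hCdef]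
    field_simp
    ring
  linarith


lemma herm_eig_le {m : Type*} [Fintype m] [DecidableEq m] {S : Matrix m m ℝ}
    (hS : S.IsHermitian) {K : ℝ}
    (hrow : ∀ p, S p p + ∑ p' ∈ Finset.univ.erase p, |S p p'| ≤ K) (i : m) :
    hS.eigenvalues i ≤ K := by
  have hv : Module.End.HasEigenvalue (Matrix.toLin' S) (hS.eigenvalues i) := by
    refine Module.End.hasEigenvalue_of_hasEigenvector
      ⟨?_, (WithLp.ofLp_eq_zero 2).ne.2 (hS.eigenvectorBasis.orthonormal.ne_zero i)⟩
    rw [Module.End.mem_eigenspace_iff, Matrix.toLin'_apply]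
    exact hS.mulVec_eigenvectorBasis i
  obtain ⟨k, hk⟩ := eigenvalue_mem_ball hv
  rw [Metric.mem_closedBall, Real.dist_eq] at hk
  have h1 := (abs_sub_le_iff.mp hk).1
  have h2 : ∑ j ∈ Finset.univ.erase k, ‖S k j‖ = ∑ j ∈ Finset.univ.erase k, |S k j| := by
    simp [Real.norm_eq_abs]
  rw [h2] at h1
  linarith [hrow k]

lemma logNorm_le {m : Type*} [Fintype m] [DecidableEq m] [Nonempty m]
    (A : Matrix m m ℝ) {K : ℝ}
    (hrow : ∀ p, ((2 : ℝ)⁻¹ • (A + Aᵀ)) p p +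
      ∑ p' ∈ Finset.univ.erase p, |((2 : ℝ)⁻¹ • (A + Aᵀ)) p p'| ≤ K) :
    logNorm A ≤ K :=
  ciSup_le fun i => herm_eig_le (isHermitian_symPart A) hrow i

lemma phi_pos {a b c q : ℝ} {h1 h2 h3 : ℕ → ℝ} (ha : 0 < a) {i j k : ℕ}
    (hs1 : 0 < ∑ ℓ ∈ Finset.range i, h1 ℓ) :
    0 < phi a b c q h1 h2 h3 i j k := by
  apply Real.rpow_pos_of_pos
  have : 0 < a ^ 2 * (∑ ℓ ∈ Finset.range i, h1 ℓ) ^ 2 := by positivity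
  nlinarith [sq_nonneg (b * ∑ ℓ ∈ Finset.range j, h2 ℓ),
    sq_nonneg (c * ∑ ℓ ∈ Finset.range k, h3 ℓ)]

lemma phi_mono1 {a b c q : ℝ} {h1 h2 h3 : ℕ → ℝ} (hq0 : 0 ≤ q) {i j k : ℕ}
    (hs : 0 ≤ ∑ ℓ ∈ Finset.range i, h1 ℓ) (hh : 0 ≤ h1 i) :
    phi a b c q h1 h2 h3 i j k ≤ phi a b c q h1 h2 h3 (i + 1) j k := by
  apply Real.rpow_le_rpow (by positivity) _ (by positivity)
  rw [Finset.sum_range_succ]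
  have hstep := pow_le_pow_left₀ hs
    (by linarith : (∑ ℓ ∈ Finset.range i, h1 ℓ) ≤ (∑ ℓ ∈ Finset.range i, h1 ℓ) + h1 i) 2
  nlinarith [mul_le_mul_of_nonneg_left hstep (sq_nonneg a)]

lemma phi_mono2 {a b c q : ℝ} {h1 h2 h3 : ℕ → ℝ} (hq0 : 0 ≤ q) {i j k : ℕ}
    (hs : 0 ≤ ∑ ℓ ∈ Finset.range j, h2 ℓ) (hh : 0 ≤ h2 j) :
    phi a b c q h1 h2 h3 i j k ≤ phi a b c q h1 h2 h3 i (j + 1) k := by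
  apply Real.rpow_le_rpow (by positivity) _ (by positivity)
  rw [Finset.sum_range_succ]
  have hstep := pow_le_pow_left₀ hs
    (by linarith : (∑ ℓ ∈ Finset.range j, h2 ℓ) ≤ (∑ ℓ ∈ Finset.range j, h2 ℓ) + h2 j) 2
  nlinarith [mul_le_mul_of_nonneg_left hstep (sq_nonneg b)]

lemma phi_mono3 {a b c q : ℝ} {h1 h2 h3 : ℕ → ℝ} (hq0 : 0 ≤ q) {i j k : ℕ}
    (hs : 0 ≤ ∑ ℓ ∈ Finset.range k, h3 ℓ) (hh : 0 ≤ h3 k) :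
    phi a b c q h1 h2 h3 i j k ≤ phi a b c q h1 h2 h3 i j (k + 1) := by
  apply Real.rpow_le_rpow (by positivity) _ (by positivity)
  rw [Finset.sum_range_succ]
  have hstep := pow_le_pow_left₀ hs
    (by linarith : (∑ ℓ ∈ Finset.range k, h3 ℓ) ≤ (∑ ℓ ∈ Finset.range k, h3 ℓ) + h3 k) 2
  nlinarith [mul_le_mul_of_nonneg_left hstep (sq_nonneg c)]

lemma dirMin_pos {N : ℕ} {h : ℕ → ℝ} (hpos : ∀ m ≤ N, 0 < h m) : 0 < dirMin N h := by
  rw [dirMin, Finset.lt_inf'_iff]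
  intro b hb
  exact hpos b (by simpa using Nat.lt_succ_iff.mp (Finset.mem_range.mp hb))

lemma dirMin_le {N : ℕ} {h : ℕ → ℝ} {m : ℕ} (hm : m ≤ N) : dirMin N h ≤ h m :=
  Finset.inf'_le h (by simp [Finset.mem_range]; omega)

end Aux

/-- under the mesh-regularity conditions (S1)–(S3) (with the
boundary conventions `φ₀ⱼₖ = φ₁ⱼₖ` etc.), the logarithmic norms satisfy
`μ(M_σ) ≤ K` for `σ = 1,2,3`. -/
theorem statement11 (n1 n2 n3 : ℕ) (a b c q : ℝ)
    (ha : 0 < a) (hb : 0 < b) (hc : 0 < c) (hq0 : 0 ≤ q) (hq2 : q ≤ 2)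
    (h1 h2 h3 : ℕ → ℝ)
    (hpos1 : ∀ j ≤ n1 + 2, 0 < h1 j)
    (hpos2 : ∀ j ≤ n2 + 2, 0 < h2 j)
    (hpos3 : ∀ j ≤ n3 + 2, 0 < h3 j)
    (K : ℝ) (hK : 0 < K)
    (hS1 : ∀ i j k : ℕ, 1 ≤ i → i ≤ n1 + 2 → 1 ≤ j → j ≤ n2 + 2 → 1 ≤ k → k ≤ n3 + 2 →
      (a ^ 2)⁻¹ * (1 / (dirMin (n1 + 2) h1 ^ 2 * phi a b c q h1 h2 h3 (max (i - 1) 1) j k) -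
        1 / (h1 (i - 1) * h1 i * phi a b c q h1 h2 h3 i j k)) ≤ K / 2)
    (hS2 : ∀ i j k : ℕ, 1 ≤ i → i ≤ n1 + 2 → 1 ≤ j → j ≤ n2 + 2 → 1 ≤ k → k ≤ n3 + 2 →
      (b ^ 2)⁻¹ * (1 / (dirMin (n2 + 2) h2 ^ 2 * phi a b c q h1 h2 h3 i (max (j - 1) 1) k) -
        1 / (h2 (j - 1) * h2 j * phi a b c q h1 h2 h3 i j k)) ≤ K / 2)
    (hS3 : ∀ i j k : ℕ, 1 ≤ i → i ≤ n1 + 2 → 1 ≤ j → j ≤ n2 + 2 → 1 ≤ k → k ≤ n3 + 2 →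
      (c ^ 2)⁻¹ * (1 / (dirMin (n3 + 2) h3 ^ 2 * phi a b c q h1 h2 h3 i j (max (k - 1) 1)) -
        1 / (h3 (k - 1) * h3 k * phi a b c q h1 h2 h3 i j k)) ≤ K / 2) :
    ∀ σ : Fin 3, logNorm (Mmat (n1 + 2) (n2 + 2) (n3 + 2) a b c q h1 h2 h3 σ) ≤ K := by
  intro σ
  have ha2 : (0:ℝ) < a ^ 2 := by positivity
  have hb2 : (0:ℝ) < b ^ 2 := by positivity
  have hc2 : (0:ℝ) < c ^ 2 := by positivity
  have hd1 : 0 < dirMin (n1 + 2) h1 := dirMin_pos hpos1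
  have hd2 : 0 < dirMin (n2 + 2) h2 := dirMin_pos hpos2
  have hd3 : 0 < dirMin (n3 + 2) h3 := dirMin_pos hpos3
  have case0 : logNorm (Mmat (n1+2) (n2+2) (n3+2) a b c q h1 h2 h3 0) ≤ K := by
    apply logNorm_le
    intro p
    obtain ⟨k, j, i⟩ := p
    have hM : ∀ x y : Idx (n1+2) (n2+2) (n3+2),
        Mmat (n1+2) (n2+2) (n3+2) a b c q h1 h2 h3 0 x y =
        (a ^ 2)⁻¹ * ((phiVec (n1+2) (n2+2) (n3+2) a b c q h1 h2 h3 x)⁻¹ *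
          ((if x.1 = y.1 then 1 else 0) *
            ((if x.2.1 = y.2.1 then 1 else 0) * tridiag (n1+2) h1 x.2.2 y.2.2))) := by
      intro x y
      obtain ⟨xk, xj, xi⟩ := x; obtain ⟨yk, yj, yi⟩ := y
      simp [Mmat, Bdiag, Matrix.smul_apply, Matrix.diagonal_mul, Matrix.kroneckerMap_apply,
        Matrix.one_apply, smul_eq_mul]
    set ψ : ℕ → ℝ := fun m => phi a b c q h1 h2 h3 (m + 1) ((j:ℕ) + 1) ((k:ℕ) + 1) with hψdef
    have hsym : ∀ y : Idx (n1+2) (n2+2) (n3+2),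
        ((2:ℝ)⁻¹ • (Mmat (n1+2) (n2+2) (n3+2) a b c q h1 h2 h3 0 +
          (Mmat (n1+2) (n2+2) (n3+2) a b c q h1 h2 h3 0)ᵀ)) (k, j, i) y =
        (if k = y.1 then 1 else 0) * ((if j = y.2.1 then 1 else 0) *
          symEntry (n1+2) (a ^ 2) h1 ψ i y.2.2) := by
      intro y
      obtain ⟨k', j', i'⟩ := y
      rw [Matrix.smul_apply, Matrix.add_apply, Matrix.transpose_apply, hM, hM]
      by_cases hk : k = k'
      · by_cases hj : j = j'
        · subst hk; subst hj
          simp only [if_pos rfl, symEntry, phiVec, hψdef, smul_eq_mul]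
          norm_num
          ring
        · simp [hj, Ne.symm hj]
      · simp [hk, Ne.symm hk]
    have hfull : ∑ p' : Idx (n1+2) (n2+2) (n3+2),
        |((2:ℝ)⁻¹ • (Mmat (n1+2) (n2+2) (n3+2) a b c q h1 h2 h3 0 +
          (Mmat (n1+2) (n2+2) (n3+2) a b c q h1 h2 h3 0)ᵀ)) (k, j, i) p'| =
        ∑ i' : Fin (n1+2), |symEntry (n1+2) (a ^ 2) h1 ψ i i'| := by
      simp only [hsym, ite_mul, one_mul, zero_mul, apply_ite (abs : ℝ → ℝ), abs_zero,
        Fintype.sum_prod_type, Finset.sum_ite_irrel, Finset.sum_const_zero,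
        Finset.sum_ite_eq, Finset.mem_univ, if_true]
    have hdiagOne : ((2:ℝ)⁻¹ • (Mmat (n1+2) (n2+2) (n3+2) a b c q h1 h2 h3 0 +
          (Mmat (n1+2) (n2+2) (n3+2) a b c q h1 h2 h3 0)ᵀ)) (k, j, i) (k, j, i) =
        symEntry (n1+2) (a ^ 2) h1 ψ i i := by
      have := hsym (k, j, i); simpa using this
    rw [Finset.sum_erase_eq_sub (Finset.mem_univ _), hfull, hdiagOne]
    have main := oneDim n1 (a ^ 2) K ha2 h1 ψ hpos1
      (by
        intro m hm
        rw [hψdef]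
        exact phi_pos ha (Finset.sum_pos
          (fun ℓ hℓ => hpos1 ℓ (by have := Finset.mem_range.mp hℓ; omega))
          Finset.nonempty_range_add_one))
      (by
        intro m hm
        rw [hψdef]
        exact phi_mono1 hq0
          (Finset.sum_nonneg fun ℓ hℓ =>
            le_of_lt (hpos1 ℓ (by have := Finset.mem_range.mp hℓ; omega)))
          (le_of_lt (hpos1 (m + 1) (by omega))))
      (dirMin (n1+2) h1) hd1 (fun m hm => dirMin_le hm)
      (by
        intro i0 hi0
        have H := hS1 (i0 + 1) ((j:ℕ) + 1) ((k:ℕ) + 1) (by omega) (by omega)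
          (by omega) (by omega) (by omega) (by omega)
        simp only [Nat.add_sub_cancel] at H
        rw [hψdef]
        simp only []
        rw [show i0 - 1 + 1 = max i0 1 by omega]
        exact H) i
    rw [Finset.sum_erase_eq_sub (Finset.mem_univ i)] at main
    linarith
  have case1 : logNorm (Mmat (n1+2) (n2+2) (n3+2) a b c q h1 h2 h3 1) ≤ K := by
    apply logNorm_le
    intro p
    obtain ⟨k, j, i⟩ := p
    have hM : ∀ x y : Idx (n1+2) (n2+2) (n3+2),
        Mmat (n1+2) (n2+2) (n3+2) a b c q h1 h2 h3 1 x y =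
        (b ^ 2)⁻¹ * ((phiVec (n1+2) (n2+2) (n3+2) a b c q h1 h2 h3 x)⁻¹ *
          ((if x.1 = y.1 then 1 else 0) *
            (tridiag (n2+2) h2 x.2.1 y.2.1 * (if x.2.2 = y.2.2 then 1 else 0)))) := by
      intro x y
      obtain ⟨xk, xj, xi⟩ := x; obtain ⟨yk, yj, yi⟩ := y
      simp [Mmat, Bdiag, Matrix.smul_apply, Matrix.diagonal_mul, Matrix.kroneckerMap_apply,
        Matrix.one_apply, smul_eq_mul]
    set ψ : ℕ → ℝ := fun m => phi a b c q h1 h2 h3 ((i:ℕ) + 1) (m + 1) ((k:ℕ) + 1) with hψdef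
    have hsym : ∀ y : Idx (n1+2) (n2+2) (n3+2),
        ((2:ℝ)⁻¹ • (Mmat (n1+2) (n2+2) (n3+2) a b c q h1 h2 h3 1 +
          (Mmat (n1+2) (n2+2) (n3+2) a b c q h1 h2 h3 1)ᵀ)) (k, j, i) y =
        (if k = y.1 then 1 else 0) * ((if i = y.2.2 then 1 else 0) *
          symEntry (n2+2) (b ^ 2) h2 ψ j y.2.1) := by
      intro y
      obtain ⟨k', j', i'⟩ := y
      rw [Matrix.smul_apply, Matrix.add_apply, Matrix.transpose_apply, hM, hM]
      by_cases hk : k = k'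
      · by_cases hi : i = i'
        · subst hk; subst hi
          simp only [if_pos rfl, symEntry, phiVec, hψdef, smul_eq_mul]
          norm_num
          ring
        · simp [hi, Ne.symm hi]
      · simp [hk, Ne.symm hk]
    have hfull : ∑ p' : Idx (n1+2) (n2+2) (n3+2),
        |((2:ℝ)⁻¹ • (Mmat (n1+2) (n2+2) (n3+2) a b c q h1 h2 h3 1 +
          (Mmat (n1+2) (n2+2) (n3+2) a b c q h1 h2 h3 1)ᵀ)) (k, j, i) p'| =
        ∑ j' : Fin (n2+2), |symEntry (n2+2) (b ^ 2) h2 ψ j j'| := by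
      simp only [hsym, ite_mul, one_mul, zero_mul, apply_ite (abs : ℝ → ℝ), abs_zero,
        Fintype.sum_prod_type, Finset.sum_ite_irrel, Finset.sum_const_zero,
        Finset.sum_ite_eq, Finset.mem_univ, if_true]
    have hdiagOne : ((2:ℝ)⁻¹ • (Mmat (n1+2) (n2+2) (n3+2) a b c q h1 h2 h3 1 +
          (Mmat (n1+2) (n2+2) (n3+2) a b c q h1 h2 h3 1)ᵀ)) (k, j, i) (k, j, i) =
        symEntry (n2+2) (b ^ 2) h2 ψ j j := by
      have := hsym (k, j, i); simpa using this
    rw [Finset.sum_erase_eq_sub (Finset.mem_univ _), hfull, hdiagOne]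
    have main := oneDim n2 (b ^ 2) K hb2 h2 ψ hpos2
      (by
        intro m hm
        rw [hψdef]
        exact phi_pos ha (Finset.sum_pos
          (fun ℓ hℓ => hpos1 ℓ (by have := Finset.mem_range.mp hℓ; have := i.isLt; omega))
          Finset.nonempty_range_add_one))
      (by
        intro m hm
        rw [hψdef]
        exact phi_mono2 hq0
          (Finset.sum_nonneg fun ℓ hℓ =>
            le_of_lt (hpos2 ℓ (by have := Finset.mem_range.mp hℓ; omega)))
          (le_of_lt (hpos2 (m + 1) (by omega))))
      (dirMin (n2+2) h2) hd2 (fun m hm => dirMin_le hm)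
      (by
        intro j0 hj0
        have H := hS2 ((i:ℕ) + 1) (j0 + 1) ((k:ℕ) + 1) (by omega)
          (by have := i.isLt; omega) (by omega) (by omega) (by omega) (by omega)
        simp only [Nat.add_sub_cancel] at H
        rw [hψdef]
        simp only []
        rw [show j0 - 1 + 1 = max j0 1 by omega]
        exact H) j
    rw [Finset.sum_erase_eq_sub (Finset.mem_univ j)] at main
    linarith
  have case2 : logNorm (Mmat (n1+2) (n2+2) (n3+2) a b c q h1 h2 h3 2) ≤ K := by
    apply logNorm_le
    intro p
    obtain ⟨k, j, i⟩ := p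
    have hM : ∀ x y : Idx (n1+2) (n2+2) (n3+2),
        Mmat (n1+2) (n2+2) (n3+2) a b c q h1 h2 h3 2 x y =
        (c ^ 2)⁻¹ * ((phiVec (n1+2) (n2+2) (n3+2) a b c q h1 h2 h3 x)⁻¹ *
          (tridiag (n3+2) h3 x.1 y.1 *
            ((if x.2.1 = y.2.1 then 1 else 0) * (if x.2.2 = y.2.2 then 1 else 0)))) := by
      intro x y
      obtain ⟨xk, xj, xi⟩ := x; obtain ⟨yk, yj, yi⟩ := y
      simp [Mmat, Bdiag, Matrix.smul_apply, Matrix.diagonal_mul, Matrix.kroneckerMap_apply,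
        Matrix.one_apply, smul_eq_mul]
      by_cases e1 : xj = yj <;> by_cases e2 : xi = yi <;> simp [e1, e2]
    set ψ : ℕ → ℝ := fun m => phi a b c q h1 h2 h3 ((i:ℕ) + 1) ((j:ℕ) + 1) (m + 1) with hψdef
    have hsym : ∀ y : Idx (n1+2) (n2+2) (n3+2),
        ((2:ℝ)⁻¹ • (Mmat (n1+2) (n2+2) (n3+2) a b c q h1 h2 h3 2 +
          (Mmat (n1+2) (n2+2) (n3+2) a b c q h1 h2 h3 2)ᵀ)) (k, j, i) y =
        (if j = y.2.1 then 1 else 0) * ((if i = y.2.2 then 1 else 0) *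
          symEntry (n3+2) (c ^ 2) h3 ψ k y.1) := by
      intro y
      obtain ⟨k', j', i'⟩ := y
      rw [Matrix.smul_apply, Matrix.add_apply, Matrix.transpose_apply, hM, hM]
      by_cases hj : j = j'
      · by_cases hi : i = i'
        · subst hj; subst hi
          simp only [if_pos rfl, symEntry, phiVec, hψdef, smul_eq_mul]
          norm_num
          ring
        · simp [hi, Ne.symm hi]
      · simp [hj, Ne.symm hj]
    have hfull : ∑ p' : Idx (n1+2) (n2+2) (n3+2),
        |((2:ℝ)⁻¹ • (Mmat (n1+2) (n2+2) (n3+2) a b c q h1 h2 h3 2 +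
          (Mmat (n1+2) (n2+2) (n3+2) a b c q h1 h2 h3 2)ᵀ)) (k, j, i) p'| =
        ∑ k' : Fin (n3+2), |symEntry (n3+2) (c ^ 2) h3 ψ k k'| := by
      simp only [hsym, ite_mul, one_mul, zero_mul, mul_ite, mul_zero, mul_one,
        apply_ite (abs : ℝ → ℝ), abs_zero,
        Fintype.sum_prod_type, Finset.sum_ite_irrel, Finset.sum_const_zero,
        Finset.sum_ite_eq, Finset.mem_univ, if_true]
    have hdiagOne : ((2:ℝ)⁻¹ • (Mmat (n1+2) (n2+2) (n3+2) a b c q h1 h2 h3 2 +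
          (Mmat (n1+2) (n2+2) (n3+2) a b c q h1 h2 h3 2)ᵀ)) (k, j, i) (k, j, i) =
        symEntry (n3+2) (c ^ 2) h3 ψ k k := by
      have := hsym (k, j, i); simpa using this
    rw [Finset.sum_erase_eq_sub (Finset.mem_univ _), hfull, hdiagOne]
    have main := oneDim n3 (c ^ 2) K hc2 h3 ψ hpos3
      (by
        intro m hm
        rw [hψdef]
        exact phi_pos ha (Finset.sum_pos
          (fun ℓ hℓ => hpos1 ℓ (by have := Finset.mem_range.mp hℓ; have := i.isLt; omega))
          Finset.nonempty_range_add_one))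
      (by
        intro m hm
        rw [hψdef]
        exact phi_mono3 hq0
          (Finset.sum_nonneg fun ℓ hℓ =>
            le_of_lt (hpos3 ℓ (by have := Finset.mem_range.mp hℓ; omega)))
          (le_of_lt (hpos3 (m + 1) (by omega))))
      (dirMin (n3+2) h3) hd3 (fun m hm => dirMin_le hm)
      (by
        intro k0 hk0
        have H := hS3 ((i:ℕ) + 1) ((j:ℕ) + 1) (k0 + 1) (by omega)
          (by have := i.isLt; omega) (by omega) (by have := j.isLt; omega) (by omega) (by omega)
        simp only [Nat.add_sub_cancel] at H
        rw [hψdef]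
        simp only []
        rw [show k0 - 1 + 1 = max k0 1 by omega]
        exact H) k
    rw [Finset.sum_erase_eq_sub (Finset.mem_univ k)] at main
    linarith
  fin_cases σ
  · exact case0
  · exact case1
  · exact case2

end Kawarada
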